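/- Let 1 < q ≤ p < ∞. A measurable function f belongs to B^{p'}_{q'}(ℝⁿ) if and only if there exists g ∈ B^{p'}_{q'}(ℝⁿ) with |f(x)| ≤ g(x) for a.e. x. Moreover in that case ‖f‖_{B^{p'}_{q'}} ≤ ‖g‖_{B^{p'}_{q'}} (the block space is solid). -/
import Mathlib


open MeasureTheory ENNReal Set Filter

/-- The open axis-parallel cube with corner `a` and side length `s`. -/
noncomputable def cube (n : ℕ) (a : Fin n → ℝ) (s : ℝ) : Set (Fin n → ℝ) :=
  Set.univ.pi fun i => Set.Ioo (a i) (a i + s)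

/-- The Morrey norm `‖f‖_{M^p_q}` on `ℝⁿ`. -/
noncomputable def morreyNorm (n : ℕ) (p q : ℝ) (f : (Fin n → ℝ) → ℝ) : ℝ≥0∞ :=
  ⨆ (a : Fin n → ℝ) (s : ℝ) (_ : 0 < s),
    ENNReal.ofReal ((s ^ n) ^ (1 / p - 1 / q)) *
      (∫⁻ x in cube n a s, ENNReal.ofReal (|f x| ^ q)) ^ (1 / q)

/-- The Hölder conjugate exponent `p' = p/(p-1)`. -/
noncomputable def conjExp (p : ℝ) : ℝ := p / (p - 1)

/-- A `(p',q')`-block: a measurable function supported on a cube `Q` with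
`‖b‖_{L^{q'}} ≤ |Q|^{1/p-1/q}`. -/
def IsBlock (n : ℕ) (p q : ℝ) (b : (Fin n → ℝ) → ℝ) : Prop :=
  Measurable b ∧ ∃ (a : Fin n → ℝ) (s : ℝ), 0 < s ∧
    Function.support b ⊆ cube n a s ∧
    (∫⁻ x, ENNReal.ofReal (|b x| ^ conjExp q)) ^ (1 / conjExp q) ≤
      ENNReal.ofReal ((s ^ n) ^ (1 / p - 1 / q))

/-- `f = ∑ₖ λₖ bₖ` a.e. with absolutely convergent coefficients and `(p',q')`-blocks. -/
def IsBlockRep (n : ℕ) (p q : ℝ) (f : (Fin n → ℝ) → ℝ) (l : ℕ → ℝ)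
    (b : ℕ → (Fin n → ℝ) → ℝ) : Prop :=
  (∀ k, IsBlock n p q (b k)) ∧ Summable (fun k => |l k|) ∧
    ∀ᵐ x : Fin n → ℝ, Summable (fun k => l k * b k x) ∧ f x = ∑' k, l k * b k x

/-- Membership in the block space `B^{p'}_{q'}(ℝⁿ)`. -/
def MemBlockSpace (n : ℕ) (p q : ℝ) (f : (Fin n → ℝ) → ℝ) : Prop :=
  ∃ l b, IsBlockRep n p q f l b

/-- The block space norm `‖f‖_{B^{p'}_{q'}}`: infimal `ℓ¹`-sum of coefficients. -/
noncomputable def blockNorm (n : ℕ) (p q : ℝ) (f : (Fin n → ℝ) → ℝ) : ℝ≥0∞ :=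
  ⨅ (l : ℕ → ℝ) (b : ℕ → (Fin n → ℝ) → ℝ) (_ : IsBlockRep n p q f l b),
    ENNReal.ofReal (∑' k, |l k|)

lemma block_abs {n : ℕ} {p q : ℝ} {b : (Fin n → ℝ) → ℝ} (h : IsBlock n p q b) :
    IsBlock n p q (fun x => |b x|) := by
  obtain ⟨hm, a, s, hs, hsupp, hnorm⟩ := h
  refine ⟨hm.abs, a, s, hs, ?_, ?_⟩
  · intro x hx
    exact hsupp (by simpa [Function.mem_support, abs_eq_zero] using hx)
  · simpa [abs_abs] using hnorm

lemma block_mul {n : ℕ} {p q : ℝ} (hq : 1 < q) {h b : (Fin n → ℝ) → ℝ}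
    (hhm : Measurable h) (hh1 : ∀ x, |h x| ≤ 1) (hb : IsBlock n p q b) :
    IsBlock n p q (fun x => h x * b x) := by
  obtain ⟨hm, a, s, hs, hsupp, hnorm⟩ := hb
  have hq' : 0 ≤ conjExp q := by
    unfold conjExp
    have : 0 < q - 1 := by linarith
    positivity
  refine ⟨hhm.mul hm, a, s, hs, ?_, ?_⟩
  · intro x hx
    apply hsupp
    simp only [Function.mem_support] at hx ⊢
    intro hb0
    exact hx (by simp [hb0])
  · refine le_trans ?_ hnorm
    refine ENNReal.rpow_le_rpow (lintegral_mono fun x => ?_) (by positivity)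
    apply ENNReal.ofReal_le_ofReal
    apply Real.rpow_le_rpow (abs_nonneg _) _ hq'
    rw [abs_mul]
    calc |h x| * |b x| ≤ 1 * |b x| := by
          exact mul_le_mul_of_nonneg_right (hh1 x) (abs_nonneg _)
      _ = |b x| := one_mul _

lemma dominate_rep {n : ℕ} {p q : ℝ} (hq : 1 < q) {f g : (Fin n → ℝ) → ℝ}
    (hf : Measurable f) {l : ℕ → ℝ} {b : ℕ → (Fin n → ℝ) → ℝ}
    (hrep : IsBlockRep n p q g l b) (hfg : ∀ᵐ x : Fin n → ℝ, |f x| ≤ g x) :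
    ∃ c, IsBlockRep n p q f l c := by
  obtain ⟨hblocks, hsum, hae⟩ := hrep
  set G : (Fin n → ℝ) → ℝ := fun x => ∑' k, l k * b k x with hGdef
  have hGm : AEMeasurable G (volume : Measure (Fin n → ℝ)) := by
    apply aemeasurable_of_tendsto_metrizable_ae'
      (f := fun N x => ∑ k ∈ Finset.range N, l k * b k x)
    · intro N
      exact (Finset.measurable_sum (Finset.range N)
        (fun k _ => ((hblocks k).1.const_mul (l k)))).aemeasurable
    · filter_upwards [hae] with x hx
      exact hx.1.hasSum.tendsto_sum_nat
  set G' := hGm.mk G with hG'def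
  have hG'm : Measurable G' := hGm.measurable_mk
  have hGG' : G =ᵐ[volume] G' := hGm.ae_eq_mk
  set S : Set (Fin n → ℝ) := {x | G' x ≠ 0 ∧ |f x| ≤ |G' x|} with hSdef
  have hSmeas : MeasurableSet S := by
    apply MeasurableSet.inter
    · exact (hG'm (measurableSet_singleton (0:ℝ))).compl
    · exact measurableSet_le hf.abs hG'm.abs
  classical
  set h : (Fin n → ℝ) → ℝ := S.piecewise (fun x => f x / G' x) 0 with hhdef
  have hhm : Measurable h := Measurable.piecewise hSmeas (hf.div hG'm) measurable_const
  have hh1 : ∀ x, |h x| ≤ 1 := by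
    intro x
    by_cases hx : x ∈ S
    · simp only [hhdef, Set.piecewise_eq_of_mem _ _ _ hx]
      rw [abs_div]
      exact div_le_one_of_le₀ hx.2 (abs_nonneg _)
    · rw [hhdef, Set.piecewise_eq_of_notMem _ _ _ hx]
      simp
  refine ⟨fun k x => h x * b k x, fun k => block_mul hq hhm hh1 (hblocks k), hsum, ?_⟩
  filter_upwards [hae, hfg, hGG'] with x hx hle hGx
  obtain ⟨hsx, hgx⟩ := hx
  have hfG' : f x = h x * G' x := by
    by_cases hxS : x ∈ S
    · simp only [hhdef, Set.piecewise_eq_of_mem _ _ _ hxS]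
      rw [div_mul_cancel₀ _ hxS.1]
    · have hGx' : G' x = G x := hGx.symm
      have h1 : |f x| ≤ |G' x| := by
        rw [hGx']
        exact (hle.trans_eq hgx).trans (le_abs_self _)
      have hG'0 : G' x = 0 := by
        by_contra h0
        exact hxS ⟨h0, h1⟩
      have hf0 : f x = 0 := by
        rw [hG'0] at h1
        simpa using abs_nonpos_iff.mp (by simpa using h1)
      simp [hf0, hG'0]
  constructor
  · have := hsx.mul_left (h x)
    refine this.congr fun k => by ring
  · have : ∑' k, l k * (h x * b k x) = h x * ∑' k, l k * b k x := by
      rw [← tsum_mul_left]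
      exact tsum_congr fun k => by ring
    rw [this]
    show f x = h x * G x
    rw [hGx]
    exact hfG'

/-- A measurable f belongs to B^{p'}_{q'} iff it is dominated a.e. by some
g ∈ B^{p'}_{q'}; in that case ‖f‖ ≤ ‖g‖ (solidity of block spaces). -/
theorem stmt7 (n : ℕ) (p q : ℝ) (hq : 1 < q) (hqp : q ≤ p)
    (f : (Fin n → ℝ) → ℝ) (hf : Measurable f) :
    (MemBlockSpace n p q f ↔
      ∃ g, MemBlockSpace n p q g ∧ ∀ᵐ x : Fin n → ℝ, |f x| ≤ g x) ∧
    (∀ g, MemBlockSpace n p q g → (∀ᵐ x : Fin n → ℝ, |f x| ≤ g x) →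
      blockNorm n p q f ≤ blockNorm n p q g) := by
  have key : ∀ g : (Fin n → ℝ) → ℝ, ∀ l b, IsBlockRep n p q g l b →
      (∀ᵐ x : Fin n → ℝ, |f x| ≤ g x) → ∃ c, IsBlockRep n p q f l c :=
    fun g l b hrep hfg => dominate_rep hq hf hrep hfg
  constructor
  · constructor
    · rintro ⟨l, b, hblocks, hsum, hae⟩
      refine ⟨fun x => ∑' k, |l k * b k x|, ⟨fun k => |l k|, fun k x => |b k x|,
        fun k => block_abs (hblocks k), by simpa using hsum, ?_⟩, ?_⟩
      · filter_upwards [hae] with x hx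
        have habs : (fun k => |l k| * |b k x|) = fun k => |l k * b k x| :=
          funext fun k => (abs_mul _ _).symm
        constructor
        · show Summable fun k => |l k| * |b k x|
          rw [habs]
          exact summable_abs_iff.mpr hx.1
        · show (∑' k, |l k * b k x|) = ∑' k, |l k| * |b k x|
          exact tsum_congr fun k => abs_mul _ _
      · filter_upwards [hae] with x hx
        obtain ⟨hs, hfx⟩ := hx
        rw [hfx]
        have := norm_tsum_le_tsum_norm (f := fun k => l k * b k x)
          (by simpa [Real.norm_eq_abs, abs_mul] using summable_abs_iff.mpr hs)
        simpa [Real.norm_eq_abs, abs_mul] using this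
    · rintro ⟨g, ⟨l, b, hrep⟩, hfg⟩
      obtain ⟨c, hc⟩ := key g l b hrep hfg
      exact ⟨l, c, hc⟩
  · rintro g ⟨l0, b0, hrep0⟩ hfg
    unfold blockNorm
    refine le_iInf fun l => le_iInf fun b => le_iInf fun hrep => ?_
    obtain ⟨c, hc⟩ := key g l b hrep hfg
    exact iInf_le_of_le l (iInf_le_of_le c (iInf_le_of_le hc le_rfl))
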